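/- Let f : ℝ → ℝ be integrable. If the primitive W_f belongs to L²(ℝ), then ∫_ℝ f(x) dx = 0 (every function of the one-dimensional Coulomb space is neutral). -/

import Mathlib

open MeasureTheory Real

/-- The primitive `W_f(x) = ∫_{-∞}^x f(y) dy`. -/
noncomputable def W (f : ℝ → ℝ) (x : ℝ) : ℝ := ∫ y in Set.Iic x, f y

/-- Every function of the one-dimensional Coulomb space is neutral: if `f` is integrable
and its primitive `W f` is in `L²(ℝ)`, then `∫ f = 0`. -/
theorem stmt0 (f : ℝ → ℝ) (hf : Integrable f)
    (hW : MemLp (W f) 2 volume) :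
    ∫ x, f x = 0 := by
  by_contra hne
  set L := ∫ x, f x with hL
  have htend : Filter.Tendsto (W f) Filter.atTop (nhds L) :=
    (MeasureTheory.aecover_Iic Filter.tendsto_id).integral_tendsto_of_countably_generated hf
  have hLpos : 0 < |L| / 2 := by positivity
  have hev : ∀ᶠ x in Filter.atTop, |W f x - L| < |L| / 2 := by
    have h0 : Filter.Tendsto (fun x => W f x - L) Filter.atTop (nhds 0) := by
      simpa using htend.sub_const L
    have := (h0.eventually (Metric.ball_mem_nhds 0 hLpos))
    simpa [Real.dist_eq] using this
  obtain ⟨M, hM⟩ := hev.exists_forall_of_atTop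
  have hsq : Integrable (fun x => W f x ^ 2) := hW.integrable_sq
  have hmeas := hsq.measure_ge_lt_top (show (0:ℝ) < (|L|/2)^2 by positivity)
  have hsub : Set.Ici M ⊆ {x | (|L|/2)^2 ≤ W f x ^ 2} := by
    intro x hx
    have h1 := hM x hx
    have h2 : |L| / 2 ≤ |W f x| := by
      have := abs_sub_abs_le_abs_sub L (W f x)
      rw [abs_sub_comm] at h1
      linarith
    simpa [sq_abs] using pow_le_pow_left₀ (le_of_lt hLpos) h2 2
  have : volume (Set.Ici M) ≤ volume {x | (|L|/2)^2 ≤ W f x ^ 2} := measure_mono hsub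
  rw [Real.volume_Ici] at this
  simp only [top_le_iff] at this
  exact hmeas.ne this
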